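/- Let the one-dimensional reflected SDE dZ_t = dW_t + B dt + dL^Z_t with Z_0 ≥ 0, where L^Z is local time at 0 and B ∈ ℝ, and let dD_t = dW_t + b_t dt + dL^D_t − dH_t be another process driven by the same Brownian motion W, with |b_t| ≤ B, D taking values in [0,∞), L^D local time of D at 0, and H non-decreasing adapted; suppose Z_0 ≥ D_0. Then Z_t ≥ D_t for all t ≥ 0 almost surely. -/
import Mathlib


open MeasureTheory

/-- One-dimensional comparison: a process `Z` reflected at `0` with constant
drift `B` dominates, pathwise almost surely, any process `D ≥ 0` driven by the same Brownian
motion with drift bounded by `B`, local time at `0`, and an extra non-decreasing subtraction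
`H`, provided `Z₀ ≥ D₀`. -/
theorem stmt9 {Ω : Type*} [MeasurableSpace Ω] (P : Measure Ω) [IsProbabilityMeasure P]
    (B : ℝ) (Z D W bdrift LZ LD H : ℝ → Ω → ℝ)
    (hWcont : ∀ᵐ ω ∂P, Continuous fun t => W t ω)
    (hW0 : ∀ ω, W 0 ω = 0)
    (hcont : ∀ᵐ ω ∂P, (Continuous fun t => Z t ω) ∧ (Continuous fun t => D t ω))
    (hZpos : ∀ᵐ ω ∂P, ∀ t : ℝ, 0 ≤ t → 0 ≤ Z t ω)
    (hDpos : ∀ᵐ ω ∂P, ∀ t : ℝ, 0 ≤ t → 0 ≤ D t ω)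
    (hb : ∀ t ω, |bdrift t ω| ≤ B)
    (hbint : ∀ ω t, IntervalIntegrable (fun s => bdrift s ω) volume 0 t)
    (hLZ : ∀ᵐ ω ∂P, MonotoneOn (fun t => LZ t ω) (Set.Ici 0) ∧ LZ 0 ω = 0 ∧
      ∀ s t : ℝ, 0 ≤ s → s ≤ t → (∀ u ∈ Set.Icc s t, Z u ω ≠ 0) → LZ t ω = LZ s ω)
    (hLD : ∀ᵐ ω ∂P, MonotoneOn (fun t => LD t ω) (Set.Ici 0) ∧ LD 0 ω = 0 ∧
      ∀ s t : ℝ, 0 ≤ s → s ≤ t → (∀ u ∈ Set.Icc s t, D u ω ≠ 0) → LD t ω = LD s ω)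
    (hH : ∀ᵐ ω ∂P, MonotoneOn (fun t => H t ω) (Set.Ici 0) ∧ H 0 ω = 0)
    (heqZ : ∀ᵐ ω ∂P, ∀ t : ℝ, 0 ≤ t →
      Z t ω = Z 0 ω + W t ω + B * t + LZ t ω)
    (heqD : ∀ᵐ ω ∂P, ∀ t : ℝ, 0 ≤ t →
      D t ω = D 0 ω + W t ω + (∫ s in (0:ℝ)..t, bdrift s ω) + LD t ω - H t ω)
    (hinit : ∀ᵐ ω ∂P, D 0 ω ≤ Z 0 ω) :
    ∀ᵐ ω ∂P, ∀ t : ℝ, 0 ≤ t → D t ω ≤ Z t ω := by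

  filter_upwards [hcont, hZpos, hDpos, hLZ, hLD, hH, heqZ, heqD, hinit] with ω
    hc hZp hDp hlz hld hh heZ heD h0
  obtain ⟨hZc, hDc⟩ := hc
  obtain ⟨hLZm, hLZ0, hLZflat⟩ := hlz
  obtain ⟨hLDm, hLD0, hLDflat⟩ := hld
  obtain ⟨hHm, hH0⟩ := hh
  intro t ht
  by_contra hcon
  push_neg at hcon
  set X : ℝ → ℝ := fun s => Z s ω - D s ω with hXdef
  have hXc : Continuous X := hZc.sub hDc
  have hXt : X t < 0 := sub_neg.mpr hcon
  have hX0 : 0 ≤ X 0 := sub_nonneg.mpr h0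
  -- drift comparison
  have hdrift : ∀ s u : ℝ, 0 ≤ s → s ≤ u →
      (∫ x in (0:ℝ)..u, bdrift x ω) - (∫ x in (0:ℝ)..s, bdrift x ω) ≤ B * (u - s) := by
    intro s u hs hsu
    have hint_su : IntervalIntegrable (fun x => bdrift x ω) volume s u :=
      (hbint ω u).mono_set (by
        rw [Set.uIcc_of_le hsu, Set.uIcc_of_le (hs.trans hsu)]
        exact Set.Icc_subset_Icc hs le_rfl)
    have hadd := intervalIntegral.integral_add_adjacent_intervals (hbint ω s) hint_su
    have hle : (∫ x in s..u, bdrift x ω) ≤ ∫ x in s..u, B := by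
      apply intervalIntegral.integral_mono_on hsu hint_su (intervalIntegrable_const)
      intro x _
      exact (abs_le.mp (hb x ω)).2
    rw [intervalIntegral.integral_const, smul_eq_mul] at hle
    linarith [hle, hadd]
  -- the set of times where X ≥ 0 before t
  set S : Set ℝ := Set.Icc 0 t ∩ X ⁻¹' Set.Ici 0 with hSdef
  have hSne : S.Nonempty := ⟨0, ⟨le_rfl, ht⟩, hX0⟩
  have hSbdd : BddAbove S := ⟨t, fun s hs => hs.1.2⟩
  have hSclosed : IsClosed S := (isClosed_Icc).inter (isClosed_Ici.preimage hXc)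
  set τ : ℝ := sSup S with hτdef
  have hτS : τ ∈ S := hSclosed.csSup_mem hSne hSbdd
  have hτ0 : 0 ≤ τ := hτS.1.1
  have hτt : τ ≤ t := hτS.1.2
  have hXτ : 0 ≤ X τ := hτS.2
  have hτlt : τ < t := lt_of_le_of_ne hτt (fun h => absurd hXτ (by rw [h]; exact not_le.mpr hXt))
  -- after τ, X < 0
  have hneg : ∀ u : ℝ, τ < u → u ≤ t → X u < 0 := by
    intro u hu hut
    by_contra hXu
    push_neg at hXu
    have : u ∈ S := ⟨⟨hτ0.trans hu.le, hut⟩, hXu⟩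
    exact absurd (le_csSup hSbdd this) (not_le.mpr hu)
  -- key monotonicity: for τ' ∈ (τ, t], X t ≥ X τ'
  have hkey : ∀ τ' : ℝ, τ < τ' → τ' ≤ t → X τ' ≤ X t := by
    intro τ' hττ' hτ't
    have hτ'0 : 0 ≤ τ' := hτ0.trans hττ'.le
    have hLDeq : LD t ω = LD τ' ω := by
      apply hLDflat τ' t hτ'0 hτ't
      intro u hu
      have hXu : X u < 0 := hneg u (hττ'.trans_le hu.1) hu.2
      have hZu : 0 ≤ Z u ω := hZp u (hτ'0.trans hu.1)
      have : 0 < D u ω := by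
        simp only [hXdef, sub_neg] at hXu
        linarith
      exact ne_of_gt this
    have heZt := heZ t (hτ0.trans hτt)
    have heZτ' := heZ τ' hτ'0
    have heDt := heD t (hτ0.trans hτt)
    have heDτ' := heD τ' hτ'0
    have hLZle : LZ τ' ω ≤ LZ t ω := hLZm hτ'0 (hτ'0.trans hτ't) hτ't
    have hHle : H τ' ω ≤ H t ω := hHm hτ'0 (hτ'0.trans hτ't) hτ't
    have hdr := hdrift τ' t hτ'0 hτ't
    simp only [hXdef]
    nlinarith [hdr, hLZle, hHle]
  -- conclude X t ≥ 0 via continuity at τ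
  have hfinal : (0:ℝ) ≤ X t := by
    apply le_of_forall_pos_le_add
    intro ε hε
    have hca : ContinuousAt X τ := hXc.continuousAt
    rw [Metric.continuousAt_iff] at hca
    obtain ⟨δ, hδ, hδprop⟩ := hca ε hε
    set τ' : ℝ := min (τ + δ / 2) t with hτ'def
    have hττ' : τ < τ' := lt_min (by linarith) hτlt
    have hτ't : τ' ≤ t := min_le_right _ _
    have hdist : dist τ' τ < δ := by
      rw [Real.dist_eq, abs_of_pos (by linarith)]
      have : τ' ≤ τ + δ / 2 := min_le_left _ _
      linarith
    have h1 : |X τ' - X τ| < ε := by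
      have := hδprop hdist
      rwa [Real.dist_eq] at this
    have h2 : X τ - ε < X τ' := by
      have := (abs_lt.mp h1).1
      linarith
    have h3 : X τ' ≤ X t := hkey τ' hττ' hτ't
    linarith
  exact absurd hfinal (not_le.mpr hXt)
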